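/- Let n ≥ 3 and let Ω ⊂ ℝⁿ be a nonempty bounded open set satisfying the uniform exterior sphere condition with radius r₀ > 0. Suppose G, defined for pairs (x,y) ∈ Ω × Ω with x ≠ y, satisfies: (a) G(x,y) ≤ 0 for all x ≠ y; (b) for every y ∈ Ω the function x ↦ G(x,y) is harmonic on Ω \ {y} and extends continuously to cl(Ω) \ {y} with value 0 at every point of ∂Ω; (c) |G(x,y)| ≤ |x−y|^{2−n} for all x ≠ y in Ω. Then there exists a constant C > 0, depending only on n, r₀ and diam(Ω), such that |G(x,y)| ≤ C·|x−y|^{1−n}·δ(x) for all x, y ∈ Ω with x ≠ y. (Part (iv) of Theorem 3.1, n ≥ 3.) -/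

import Mathlib

open Metric MeasureTheory Filter Set
open scoped RealInnerProductSpace Topology

noncomputable def laplacianR (n : ℕ) (u : EuclideanSpace ℝ (Fin n) → ℝ)
    (x : EuclideanSpace ℝ (Fin n)) : ℝ :=
  ∑ i : Fin n,
    fderiv ℝ (fun y => fderiv ℝ u y (EuclideanSpace.single i 1)) x (EuclideanSpace.single i 1)

/-- `u` is harmonic on `U`: twice continuously differentiable with vanishing Laplacian. -/
def HarmonicOnR (n : ℕ) (u : EuclideanSpace ℝ (Fin n) → ℝ)
    (U : Set (EuclideanSpace ℝ (Fin n))) : Prop :=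
  ContDiffOn ℝ 2 u U ∧ ∀ x ∈ U, laplacianR n u x = 0

/-- `Ω` satisfies the uniform exterior sphere condition with radius `r₀`. -/
def UnifExtSphere {n : ℕ} (Ω : Set (EuclideanSpace ℝ (Fin n))) (r₀ : ℝ) : Prop :=
  ∀ z ∈ frontier Ω, ∀ r : ℝ, 0 < r → r < r₀ →
    ∃ c : EuclideanSpace ℝ (Fin n),
      ball c r ⊆ (closure Ω)ᶜ ∧ closure (ball c r) ∩ closure Ω = {z}

namespace GreenAux

variable {n : ℕ}

lemma lap_congr {f g : EuclideanSpace ℝ (Fin n) → ℝ} {x : EuclideanSpace ℝ (Fin n)}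
    (h : f =ᶠ[nhds x] g) : laplacianR n f x = laplacianR n g x := by
  unfold laplacianR
  refine Finset.sum_congr rfl fun i _ => ?_
  have h1 : (fun y => fderiv ℝ f y (EuclideanSpace.single i 1)) =ᶠ[nhds x]
      (fun y => fderiv ℝ g y (EuclideanSpace.single i 1)) := by
    filter_upwards [h.eventuallyEq_nhds] with y hy
    rw [hy.fderiv_eq]
  exact congrFun (congrArg _ h1.fderiv_eq) _

lemma diff_fderiv_apply {f : EuclideanSpace ℝ (Fin n) → ℝ} {x : EuclideanSpace ℝ (Fin n)}
    (hf : ContDiffAt ℝ 2 f x) (e : EuclideanSpace ℝ (Fin n)) :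
    DifferentiableAt ℝ (fun y => fderiv ℝ f y e) x := by
  have h1 : ContDiffAt ℝ 1 (fderiv ℝ f) x := hf.fderiv_right (by norm_num)
  exact (h1.differentiableAt (by norm_num)).clm_apply (differentiableAt_const e)

lemma lap_add {f g : EuclideanSpace ℝ (Fin n) → ℝ} {x : EuclideanSpace ℝ (Fin n)}
    (hf : ContDiffAt ℝ 2 f x) (hg : ContDiffAt ℝ 2 g x) :
    laplacianR n (fun y => f y + g y) x = laplacianR n f x + laplacianR n g x := by
  have hfd : ∀ᶠ y in nhds x, DifferentiableAt ℝ f y := by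
    filter_upwards [hf.eventually (by norm_num)] with y hy
    exact hy.differentiableAt (by norm_num)
  have hgd : ∀ᶠ y in nhds x, DifferentiableAt ℝ g y := by
    filter_upwards [hg.eventually (by norm_num)] with y hy
    exact hy.differentiableAt (by norm_num)
  unfold laplacianR
  rw [← Finset.sum_add_distrib]
  refine Finset.sum_congr rfl fun i _ => ?_
  set e := EuclideanSpace.single i (1:ℝ)
  have h1 : (fun y => fderiv ℝ (fun z => f z + g z) y e) =ᶠ[nhds x]
      (fun y => fderiv ℝ f y e + fderiv ℝ g y e) := by
    filter_upwards [hfd, hgd] with y hfy hgy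
    rw [fderiv_fun_add hfy hgy]; rfl
  rw [h1.fderiv_eq, fderiv_fun_add (diff_fderiv_apply hf e) (diff_fderiv_apply hg e)]
  rfl

lemma lap_const_mul {f : EuclideanSpace ℝ (Fin n) → ℝ} {x : EuclideanSpace ℝ (Fin n)}
    (hf : ContDiffAt ℝ 2 f x) (c : ℝ) :
    laplacianR n (fun y => c * f y) x = c * laplacianR n f x := by
  have hfd : ∀ᶠ y in nhds x, DifferentiableAt ℝ f y := by
    filter_upwards [hf.eventually (by norm_num)] with y hy
    exact hy.differentiableAt (by norm_num)
  unfold laplacianR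
  rw [Finset.mul_sum]
  refine Finset.sum_congr rfl fun i _ => ?_
  set e := EuclideanSpace.single i (1:ℝ)
  have h1 : (fun y => fderiv ℝ (fun z => c * f z) y e) =ᶠ[nhds x]
      (fun y => c * fderiv ℝ f y e) := by
    filter_upwards [hfd] with y hfy
    rw [fderiv_const_mul hfy]; rfl
  rw [h1.fderiv_eq, fderiv_const_mul (diff_fderiv_apply hf e)]
  rfl

lemma lap_add_const {f : EuclideanSpace ℝ (Fin n) → ℝ} {x : EuclideanSpace ℝ (Fin n)} (a : ℝ) :
    laplacianR n (fun y => f y + a) x = laplacianR n f x := by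
  unfold laplacianR
  refine Finset.sum_congr rfl fun i _ => ?_
  set e := EuclideanSpace.single i (1:ℝ)
  have h1 : (fun y => fderiv ℝ (fun z => f z + a) y e) = (fun y => fderiv ℝ f y e) := by
    funext y; rw [fderiv_add_const]
  rw [h1]


local notation "En" => EuclideanSpace ℝ (Fin n)

lemma inner_single_sq_sum (v : En) :
    ∑ i : Fin n, (inner ℝ v (EuclideanSpace.single i (1:ℝ)) : ℝ) ^ 2 = ⟪v, v⟫ := by
  simp only [EuclideanSpace.inner_single_right, starRingEnd_apply, star_trivial, one_mul]
  rw [PiLp.inner_apply]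
  simp [RCLike.inner_apply, sq]

lemma fderiv_sub_const_id (c y : En) :
    fderiv ℝ (fun t : En => t - c) y = ContinuousLinearMap.id ℝ En := by
  rw [fderiv_sub_const, fderiv_id']

/-- derivative of `y ↦ ⟪y - c, y - c⟫` in direction `e`. -/
lemma fderiv_Q_apply (c : En) (y e : En) :
    fderiv ℝ (fun t => ⟪t - c, t - c⟫) y e = 2 * ⟪y - c, e⟫ := by
  have hd : DifferentiableAt ℝ (fun t : En => t - c) y :=
    differentiableAt_id.sub_const c
  rw [fderiv_inner_apply ℝ hd hd, fderiv_sub_const_id c y]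
  simp only [ContinuousLinearMap.id_apply]
  rw [real_inner_comm e (y - c)]
  ring

lemma diffQ (c : En) (y : En) : DifferentiableAt ℝ (fun t : En => ⟪t - c, t - c⟫) y :=
  (differentiableAt_id.sub_const c).inner ℝ (differentiableAt_id.sub_const c)

lemma contDiffQ (c : En) : ContDiff ℝ 2 (fun t : En => ⟪t - c, t - c⟫) :=
  ContDiff.inner ℝ (contDiff_id.sub contDiff_const) (contDiff_id.sub contDiff_const)

/-- Laplacian of `t ↦ ⟪t,t⟫` is `2n`. -/
lemma lap_normSq (x : En) :
    laplacianR n (fun t => ⟪t - 0, t - 0⟫) x = 2 * n := by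
  unfold laplacianR
  have h1 : ∀ i : Fin n,
      fderiv ℝ (fun y => fderiv ℝ (fun t : En => ⟪t - 0, t - 0⟫) y
        (EuclideanSpace.single i 1)) x (EuclideanSpace.single i 1) = 2 := by
    intro i
    set e := EuclideanSpace.single i (1:ℝ) with he
    have h2 : (fun y : En => fderiv ℝ (fun t : En => ⟪t - 0, t - 0⟫) y e)
        = fun y => 2 * ⟪y - 0, e⟫ := by
      funext y; exact fderiv_Q_apply 0 y e
    rw [h2]
    have hdi : DifferentiableAt ℝ (fun y : En => ⟪y - (0:En), e⟫) x :=
      (differentiableAt_id.sub_const 0).inner ℝ (differentiableAt_const e)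
    rw [fderiv_const_mul hdi]
    have h3 : fderiv ℝ (fun y : En => ⟪y - (0:En), e⟫) x e = ⟪e, e⟫ := by
      rw [fderiv_inner_apply ℝ (differentiableAt_fun_id.sub_const 0) (differentiableAt_const e),
        fderiv_sub_const_id 0 x]
      simp
    have h4 : (⟪e, e⟫ : ℝ) = 1 := by
      rw [he, EuclideanSpace.inner_single_right]
      simp
    simp only [ContinuousLinearMap.smul_apply, smul_eq_mul, h3, h4]
    norm_num
  rw [Finset.sum_congr rfl fun i _ => h1 i]
  simp [Finset.card_univ, mul_comm]


section Radial

/-- The radial function `t ↦ ‖t - c‖ ^ p`, written via the inner product. -/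
noncomputable def radial {m : ℕ} (c : EuclideanSpace ℝ (Fin m)) (p : ℝ)
    (t : EuclideanSpace ℝ (Fin m)) : ℝ := (⟪t - c, t - c⟫) ^ (p/2)

lemma Q_pos (c : En) {t : En} (ht : t ≠ c) : (0:ℝ) < ⟪t - c, t - c⟫ := by
  rw [real_inner_self_eq_norm_sq]
  have h : t - c ≠ 0 := sub_ne_zero.2 ht
  exact pow_pos (norm_pos_iff.mpr h) 2

lemma radial_eq_norm_rpow (c : En) (p : ℝ) (t : En) : radial c p t = ‖t - c‖ ^ p := by
  unfold radial
  rw [real_inner_self_eq_norm_sq, ← Real.rpow_natCast ‖t - c‖ 2,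
    ← Real.rpow_mul (norm_nonneg _)]
  congr 1
  push_cast
  ring

lemma contDiffAt_radial (c : En) (p : ℝ) {t : En} (ht : t ≠ c) : ContDiffAt ℝ 2 (radial c p) t := by
  have h1 : ContDiffAt ℝ 2 (fun s : ℝ => s ^ (p/2)) (⟪t - c, t - c⟫) :=
    Real.contDiffAt_rpow_const_of_ne (Q_pos c ht).ne'
  exact h1.comp t (contDiffQ c).contDiffAt

lemma hasFDerivAt_rpowQ (c : En) {t : En} (ht : t ≠ c) (q : ℝ) :
    HasFDerivAt (fun y : En => (⟪y - c, y - c⟫) ^ q)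
      ((q * (⟪t - c, t - c⟫) ^ (q - 1)) • fderiv ℝ (fun y : En => ⟪y - c, y - c⟫) t) t := by
  have houter : HasDerivAt (fun s : ℝ => s ^ q) (q * (⟪t - c, t - c⟫) ^ (q - 1))
      (⟪t - c, t - c⟫) := Real.hasDerivAt_rpow_const (Or.inl (Q_pos c ht).ne')
  exact houter.comp_hasFDerivAt t (diffQ c t).hasFDerivAt

lemma fderiv_radial_apply (c : En) (p : ℝ) {y : En} (hy : y ≠ c) (e : En) :
    fderiv ℝ (radial c p) y e = p * (⟪y - c, y - c⟫) ^ (p/2 - 1) * ⟪y - c, e⟫ := by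
  unfold radial
  rw [(hasFDerivAt_rpowQ c hy (p/2)).fderiv]
  simp only [ContinuousLinearMap.smul_apply, smul_eq_mul]
  rw [fderiv_Q_apply]
  ring

lemma lap_radial (c : En) (p : ℝ) {x : En} (hx : x ≠ c) :
    laplacianR n (radial c p) x = p * (n + p - 2) * (⟪x - c, x - c⟫) ^ (p/2 - 1) := by
  have hQx := Q_pos c hx
  unfold laplacianR
  have key : ∀ i : Fin n,
      fderiv ℝ (fun y => fderiv ℝ (radial c p) y (EuclideanSpace.single i 1)) x
        (EuclideanSpace.single i 1)
      = p * (⟪x - c, x - c⟫) ^ (p/2 - 1)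
        + p * (p - 2) * (⟪x - c, x - c⟫) ^ (p/2 - 2) * (⟪x - c, EuclideanSpace.single i 1⟫) ^ 2 := by
    intro i
    set e := EuclideanSpace.single i (1:ℝ) with he
    have hopen : IsOpen {y : En | y ≠ c} := isOpen_ne
    have h2 : (fun y : En => fderiv ℝ (radial c p) y e) =ᶠ[nhds x]
        (fun y : En => (p * (⟪y - c, y - c⟫) ^ (p/2 - 1)) * ⟪y - c, e⟫) := by
      filter_upwards [hopen.mem_nhds hx] with y hy
      rw [fderiv_radial_apply c p hy e]
    rw [h2.fderiv_eq]
    have hA : DifferentiableAt ℝ (fun y : En => (⟪y - c, y - c⟫) ^ (p/2 - 1)) x :=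
      (hasFDerivAt_rpowQ c hx (p/2 - 1)).differentiableAt
    have hB : DifferentiableAt ℝ (fun y : En => ⟪y - c, e⟫) x :=
      (differentiableAt_id.sub_const c).inner ℝ (differentiableAt_const e)
    have hA' : DifferentiableAt ℝ (fun y : En => p * (⟪y - c, y - c⟫) ^ (p/2 - 1)) x :=
      (differentiableAt_const p).mul hA
    rw [fderiv_fun_mul hA' hB]
    have hBe : fderiv ℝ (fun y : En => ⟪y - c, e⟫) x e = 1 := by
      rw [fderiv_inner_apply ℝ (differentiableAt_fun_id.sub_const c) (differentiableAt_const e),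
        fderiv_sub_const_id c x]
      simp only [ContinuousLinearMap.id_apply, fderiv_fun_const, Pi.zero_apply,
        ContinuousLinearMap.zero_apply, inner_zero_right, add_zero, zero_add]
      rw [he, EuclideanSpace.inner_single_right]
      simp
    have hAe : fderiv ℝ (fun y : En => p * (⟪y - c, y - c⟫) ^ (p/2 - 1)) x e
        = p * ((p/2 - 1) * (⟪x - c, x - c⟫) ^ (p/2 - 2) * (2 * ⟪x - c, e⟫)) := by
      rw [fderiv_const_mul hA]
      simp only [ContinuousLinearMap.smul_apply, smul_eq_mul]
      rw [(hasFDerivAt_rpowQ c hx (p/2 - 1)).fderiv]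
      simp only [ContinuousLinearMap.smul_apply, smul_eq_mul]
      rw [fderiv_Q_apply]
      ring_nf
    simp only [ContinuousLinearMap.add_apply, ContinuousLinearMap.smul_apply, smul_eq_mul]
    rw [hBe, hAe]
    ring
  rw [Finset.sum_congr rfl fun i _ => key i, Finset.sum_add_distrib, Finset.sum_const,
    Finset.card_univ]
  have hsq : ∑ i : Fin n, (⟪x - c, EuclideanSpace.single i (1:ℝ)⟫ : ℝ) ^ 2 = ⟪x - c, x - c⟫ :=
    inner_single_sq_sum (x - c)
  rw [← Finset.mul_sum, hsq]
  have hQpow : (⟪x - c, x - c⟫ : ℝ) ^ (p/2 - 2) * (⟪x - c, x - c⟫ : ℝ)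
      = (⟪x - c, x - c⟫ : ℝ) ^ (p/2 - 1) := by
    nth_rewrite 2 [← Real.rpow_one (⟪x - c, x - c⟫ : ℝ)]
    rw [← Real.rpow_add hQx]
    congr 1
    ring
  have : (p * (p - 2) * (⟪x - c, x - c⟫ : ℝ) ^ (p/2 - 2)) * (⟪x - c, x - c⟫ : ℝ)
      = p * (p - 2) * (⟪x - c, x - c⟫ : ℝ) ^ (p/2 - 1) := by
    rw [mul_assoc, hQpow]
  simp only [Fintype.card_fin, nsmul_eq_mul]
  rw [mul_assoc, hQpow]
  ring

lemma lap_radial_zero (c : En) (p : ℝ) {x : En} (hx : x ≠ c) (hp : p = 2 - n) :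
    laplacianR n (radial c p) x = 0 := by
  rw [lap_radial c p hx, hp]
  ring_nf

end Radial


section MaxPrinciple

lemma secondDir_nonpos_of_isLocalMax {f : EuclideanSpace ℝ (Fin n) → ℝ}
    {U : Set (EuclideanSpace ℝ (Fin n))} (hU : IsOpen U)
    {x : EuclideanSpace ℝ (Fin n)} (hx : x ∈ U) (hf : ContDiffOn ℝ 2 f U)
    (hmax : IsLocalMax f x) (e : EuclideanSpace ℝ (Fin n)) :
    fderiv ℝ (fun y => fderiv ℝ f y e) x e ≤ 0 := by
  by_contra hL'
  push_neg at hL'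
  set L := fderiv ℝ (fun y => fderiv ℝ f y e) x e with hLdef
  have hCA : ∀ y ∈ U, ContDiffAt ℝ 2 f y := fun y hy => (hf y hy).contDiffAt (hU.mem_nhds hy)
  set ψ : ℝ → En := fun s => x + s • e with hψdef
  have hψc : Continuous ψ := continuous_const.add (continuous_id.smul continuous_const)
  have hψ0 : ψ 0 = x := by simp [hψdef]
  have hψd : ∀ s : ℝ, HasDerivAt ψ e s := by
    intro s
    have h1 : HasDerivAt (fun s : ℝ => s • e) ((1:ℝ) • e) s := (hasDerivAt_id s).smul_const e
    simpa [hψdef] using h1.const_add x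
  obtain ⟨δ, hδpos, hδ⟩ : ∃ δ > 0, ∀ s : ℝ, |s| < δ → ψ s ∈ U := by
    have hmem : ψ ⁻¹' U ∈ nhds (0:ℝ) :=
      hψc.continuousAt.preimage_mem_nhds (hψ0 ▸ hU.mem_nhds hx)
    rcases Metric.mem_nhds_iff.1 hmem with ⟨δ, hδpos, hδ⟩
    exact ⟨δ, hδpos, fun s hs => hδ (by simpa [Real.dist_eq] using hs)⟩
  set φ : ℝ → ℝ := fun s => f (ψ s) with hφdef
  set φ' : ℝ → ℝ := fun s => fderiv ℝ f (ψ s) e with hφ'def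
  have hφd : ∀ s : ℝ, |s| < δ → HasDerivAt φ (φ' s) s := by
    intro s hs
    have hdf : DifferentiableAt ℝ f (ψ s) := (hCA _ (hδ s hs)).differentiableAt (by norm_num)
    exact hdf.hasFDerivAt.comp_hasDerivAt s (hψd s)
  have hφ'd : HasDerivAt φ' L 0 := by
    have hg : DifferentiableAt ℝ (fun y => fderiv ℝ f y e) (ψ 0) := by
      rw [hψ0]; exact diff_fderiv_apply (hCA x hx) e
    have h2 := hg.hasFDerivAt.comp_hasDerivAt 0 (hψd 0)
    rw [hψ0] at h2
    exact h2
  have hφmax : IsLocalMax φ 0 := by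
    have ht : Filter.Tendsto ψ (nhds 0) (nhds x) := hψ0 ▸ hψc.continuousAt
    have h3 := ht.eventually hmax
    filter_upwards [h3] with s hs
    simpa [hφdef, hψ0] using hs
  have hφ'0 : φ' 0 = 0 := hφmax.hasDerivAt_eq_zero (hφd 0 (by simpa using hδpos))
  have hslope : Filter.Tendsto (fun s => φ' s / s) (nhdsWithin 0 (Set.Ioi 0)) (nhds L) := by
    have h1 := hasDerivAt_iff_tendsto_slope.1 hφ'd
    have h2 : Filter.Tendsto (slope φ' 0) (nhdsWithin 0 (Set.Ioi 0)) (nhds L) :=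
      h1.mono_left (nhdsWithin_mono _ (fun s hs => ne_of_gt hs))
    have h4 : ∀ s : ℝ, slope φ' 0 s = φ' s / s := by
      intro s
      rw [slope_def_field, hφ'0]
      simp
    have h5 : slope φ' 0 = fun s => φ' s / s := funext h4
    rw [h5] at h2
    exact h2
  have hev : ∀ᶠ s in nhdsWithin 0 (Set.Ioi 0), 0 < φ' s := by
    have h3 : ∀ᶠ s in nhdsWithin 0 (Set.Ioi 0), 0 < φ' s / s :=
      hslope.eventually (eventually_gt_nhds hL')
    filter_upwards [h3, self_mem_nhdsWithin] with s hs1 hs2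
    have hs2' : (0:ℝ) < s := hs2
    have := mul_pos hs1 hs2'
    rwa [div_mul_cancel₀ _ (ne_of_gt hs2')] at this
  obtain ⟨b, hb, hIoo⟩ := mem_nhdsGT_iff_exists_Ioo_subset.1 hev
  obtain ⟨ε, hεpos, hball⟩ := Metric.eventually_nhds_iff.1 hφmax
  have hb' : (0:ℝ) < b := hb
  set ρ : ℝ := min (min (δ/2) (b/2)) (ε/2) with hρdef
  have hρpos : 0 < ρ := lt_min (lt_min (by linarith) (by linarith)) (by linarith)
  have hρδ : ρ < δ := lt_of_le_of_lt (le_trans (min_le_left _ _) (min_le_left _ _)) (by linarith)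
  have hρb : ρ < b :=
    lt_of_le_of_lt (le_trans (min_le_left _ _) (min_le_right _ _)) (by linarith)
  have hρε : ρ < ε := lt_of_le_of_lt (min_le_right _ _) (by linarith)
  have hcont : ContinuousOn φ (Set.Icc 0 ρ) := by
    intro s hs
    have habs : |s| < δ := by
      rw [abs_lt]
      exact ⟨by linarith [hs.1], by linarith [hs.2]⟩
    exact ((hφd s habs).continuousAt).continuousWithinAt
  have hderiv : ∀ s ∈ interior (Set.Icc (0:ℝ) ρ), 0 < deriv φ s := by
    intro s hs
    rw [interior_Icc] at hs
    have habs : |s| < δ := by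
      rw [abs_lt]
      exact ⟨by linarith [hs.1], by linarith [hs.2]⟩
    rw [(hφd s habs).deriv]
    exact hIoo ⟨hs.1, lt_trans hs.2 hρb⟩
  have hmono := strictMonoOn_of_deriv_pos (convex_Icc (0:ℝ) ρ) hcont hderiv
  have hlt : φ 0 < φ ρ :=
    hmono (Set.left_mem_Icc.2 hρpos.le) (Set.right_mem_Icc.2 hρpos.le) hρpos
  have hle : φ ρ ≤ φ 0 := by
    have h5 := hball (y := ρ)
      (by rw [Real.dist_eq, sub_zero, abs_of_pos hρpos]; exact hρε)
    simpa [hφdef, hψ0] using h5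
  linarith

lemma weak_max_principle {U : Set (EuclideanSpace ℝ (Fin n))} (hUo : IsOpen U)
    (hUb : Bornology.IsBounded U) {F : EuclideanSpace ℝ (Fin n) → ℝ}
    (hFc : ContinuousOn F (closure U)) (hF2 : ContDiffOn ℝ 2 F U)
    (hlap : ∀ t ∈ U, laplacianR n F t = 0) (hn : 0 < n)
    (hbd : ∀ t ∈ frontier U, F t ≤ 0) : ∀ x ∈ U, F x ≤ 0 := by
  intro x hx
  obtain ⟨R, hRsub⟩ := hUb.closure.subset_closedBall 0
  have hR : ∀ t ∈ closure U, ‖t‖ ≤ R := by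
    intro t ht
    have h6 := hRsub ht
    rwa [Metric.mem_closedBall, dist_zero_right] at h6
  have hR0 : 0 ≤ R := le_trans (norm_nonneg x) (hR x (subset_closure hx))
  set q0 : En → ℝ := fun t => ⟪t - 0, t - 0⟫ with hq0def
  have hq0c : Continuous q0 := (contDiffQ (0:En)).continuous
  have hq0nn : ∀ t : En, 0 ≤ q0 t := fun t => real_inner_self_nonneg
  have hq0le : ∀ t ∈ closure U, q0 t ≤ R ^ 2 := by
    intro t ht
    have h1 : q0 t = ‖t - 0‖ ^ 2 := real_inner_self_eq_norm_sq _
    rw [h1, sub_zero]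
    exact pow_le_pow_left₀ (norm_nonneg t) (hR t ht) 2
  have key : ∀ ε : ℝ, 0 < ε → F x ≤ ε * R ^ 2 := by
    intro ε hε
    set Fε : En → ℝ := fun t => F t + ε * q0 t with hFεdef
    have hFεc : ContinuousOn Fε (closure U) :=
      hFc.add ((continuous_const.mul hq0c).continuousOn)
    have hK : IsCompact (closure U) :=
      Metric.isCompact_of_isClosed_isBounded isClosed_closure hUb.closure
    obtain ⟨m, hm, hmax⟩ := hK.exists_isMaxOn ⟨x, subset_closure hx⟩ hFεc
    have hmfr : m ∈ frontier U := by
      by_contra hmfr'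
      have hmU : m ∈ U := by
        by_contra hmU'
        exact hmfr' (hUo.frontier_eq ▸ ⟨hm, hmU'⟩)
      have hloc : IsLocalMax Fε m := by
        filter_upwards [hUo.mem_nhds hmU] with t ht
        exact hmax (subset_closure ht)
      have hcdF : ContDiffAt ℝ 2 F m := (hF2 m hmU).contDiffAt (hUo.mem_nhds hmU)
      have hcdq : ContDiffAt ℝ 2 q0 m := (contDiffQ (0:En)).contDiffAt
      have hlapε : laplacianR n Fε m = ε * (2 * n) := by
        have h1 := lap_add (f := F) (g := fun t => ε * q0 t) hcdF (contDiffAt_const.mul hcdq)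
        have h2 := lap_const_mul (f := q0) hcdq ε
        have h3 := lap_normSq (n := n) m
        calc laplacianR n Fε m
            = laplacianR n F m + laplacianR n (fun t => ε * q0 t) m := h1
          _ = ε * (2 * n) := by rw [hlap m hmU, h2, hq0def, h3]; ring
      have hF2ε : ContDiffOn ℝ 2 Fε U :=
        hF2.add ((contDiff_const.mul (contDiffQ (0:En))).contDiffOn)
      have hle0 : laplacianR n Fε m ≤ 0 := by
        unfold laplacianR
        refine Finset.sum_nonpos fun i _ => ?_
        exact secondDir_nonpos_of_isLocalMax hUo hmU hF2ε hloc _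
      have hnpos : (0:ℝ) < n := by exact_mod_cast hn
      nlinarith
    have h1 : Fε x ≤ Fε m := hmax (subset_closure hx)
    have h2 : F m ≤ 0 := hbd m hmfr
    have h3 : q0 m ≤ R ^ 2 := hq0le m hm
    have h4 : 0 ≤ q0 x := hq0nn x
    have h5 : F x + ε * q0 x ≤ F m + ε * q0 m := h1
    nlinarith
  by_contra hFx
  push_neg at hFx
  have hkey := key (F x / (R ^ 2 + 1)) (by positivity)
  have hlt : F x / (R ^ 2 + 1) * R ^ 2 < F x := by
    rw [div_mul_eq_mul_div, div_lt_iff₀ (by positivity)]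
    nlinarith
  linarith

end MaxPrinciple


lemma key_ineq {r s q : ℝ} (hr : 0 < r) (hrs : r ≤ s) (hq : 1 ≤ q) :
    r ^ (-q) - s ^ (-q) ≤ q * (s - r) * r ^ (-q - 1) := by
  have hs : 0 < s := hr.trans_le hrs
  have hx : -1 ≤ (r - s)/s := by
    rw [le_div_iff₀ hs]; linarith
  have hb := one_add_mul_self_le_rpow_one_add hx hq
  have h1 : 1 + (r - s)/s = r/s := by field_simp; ring
  rw [h1, Real.div_rpow hr.le hs.le] at hb
  have hA : 0 < r ^ q := Real.rpow_pos_of_pos hr q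
  have hB : 0 < s ^ q := Real.rpow_pos_of_pos hs q
  have hC : 0 < s ^ (q - 1) := Real.rpow_pos_of_pos hs _
  have hCs : s ^ (q - 1) * s = s ^ q := by
    nth_rewrite 2 [← Real.rpow_one s]
    rw [← Real.rpow_add hs]
    congr 1; ring
  have hAB : r ^ q ≤ s ^ q := Real.rpow_le_rpow hr.le hrs (by linarith)
  have h3 : (1 + q * ((r - s)/s)) * s ^ q ≤ r ^ q := (le_div_iff₀ hB).1 hb
  have h4 : (1 + q * ((r - s)/s)) * s ^ q = s ^ q + q * (r - s) * s ^ (q - 1) := by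
    rw [← hCs]; field_simp
  have h2 : s ^ q - r ^ q ≤ q * (s - r) * s ^ (q - 1) := by
    rw [h4] at h3; nlinarith
  rw [Real.rpow_neg hr.le, Real.rpow_neg hs.le]
  have hrq1 : r ^ (-q - 1) = ((r ^ q) * r)⁻¹ := by
    rw [show -q - 1 = -(q + 1) by ring, Real.rpow_neg hr.le]
    congr 1
    rw [Real.rpow_add hr, Real.rpow_one]
  rw [hrq1, inv_sub_inv hA.ne' hB.ne']
  rw [div_le_iff₀ (by positivity)]
  have e : q * (s - r) * (r ^ q * r)⁻¹ * (r ^ q * s ^ q) = q * (s - r) * (s ^ q / r) := by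
    field_simp
  rw [e]
  have h7 : s ^ (q - 1) ≤ s ^ q / r := by
    rw [← hCs, mul_div_assoc]
    exact le_mul_of_one_le_right hC.le ((one_le_div hr).2 hrs)
  have h8 : q * (s - r) * s ^ (q - 1) ≤ q * (s - r) * (s ^ q / r) := by
    apply mul_le_mul_of_nonneg_left h7
    nlinarith
  linarith

end GreenAux

open GreenAux

set_option maxHeartbeats 1000000 in
theorem green_function_boundary_decay_dim_ge_three
    (n : ℕ) (hn : 3 ≤ n)
    (Ω : Set (EuclideanSpace ℝ (Fin n)))
    (hΩo : IsOpen Ω) (hΩb : Bornology.IsBounded Ω) (hΩne : Ω.Nonempty)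
    (r₀ : ℝ) (hr₀ : 0 < r₀) (hsphere : UnifExtSphere Ω r₀)
    (G : EuclideanSpace ℝ (Fin n) → EuclideanSpace ℝ (Fin n) → ℝ)
    (hneg : ∀ x ∈ Ω, ∀ y ∈ Ω, x ≠ y → G x y ≤ 0)
    (hharm : ∀ y ∈ Ω, HarmonicOnR n (fun x => G x y) (Ω \ {y}))
    (hext : ∀ y ∈ Ω, ∃ G' : EuclideanSpace ℝ (Fin n) → ℝ,
      ContinuousOn G' (closure Ω \ {y}) ∧
      (∀ x ∈ Ω \ {y}, G' x = G x y) ∧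
      (∀ x ∈ frontier Ω, G' x = 0))
    (hbound : ∀ x ∈ Ω, ∀ y ∈ Ω, x ≠ y → |G x y| ≤ ‖x - y‖ ^ ((2 : ℝ) - n)) :
    ∃ C > (0 : ℝ), ∀ x ∈ Ω, ∀ y ∈ Ω, x ≠ y →
      |G x y| ≤ C * ‖x - y‖ ^ ((1 : ℝ) - n) * infDist x (frontier Ω) := by
  classical
  have hn3 : (3:ℝ) ≤ (n:ℝ) := by exact_mod_cast hn
  set q : ℝ := (n:ℝ) - 2 with hqdef
  have hq1 : 1 ≤ q := by rw [hqdef]; linarith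
  have hq0 : 0 ≤ q := by linarith
  set Dm : ℝ := Metric.diam Ω with hDm
  have hDm0 : 0 ≤ Dm := Metric.diam_nonneg
  have h2q : (0:ℝ) < (2:ℝ) ^ q := Real.rpow_pos_of_pos (by norm_num) q
  have hDr : 0 ≤ 2 * Dm / r₀ := by positivity
  set Cm : ℝ := (3/2) * q * (2:ℝ) ^ q * (16 + 2 * Dm / r₀) with hCm
  have hCm0 : 0 ≤ Cm := by
    apply mul_nonneg (mul_nonneg (mul_nonneg (by norm_num) hq0) h2q.le)
    linarith
  refine ⟨Cm + 4, by linarith, ?_⟩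
  intro x hx y hy hxy
  set p : ℝ := (2:ℝ) - n with hpdef
  have hpq : p = -q := by rw [hpdef, hqdef]; ring
  have hp1 : p ≤ -1 := by rw [hpdef]; linarith
  set ρ : ℝ := ‖x - y‖ with hρdef
  have hρ : 0 < ρ := by rw [hρdef]; exact norm_pos_iff.mpr (sub_ne_zero.2 hxy)
  set d : ℝ := infDist x (frontier Ω) with hddef
  have hd0 : 0 ≤ d := infDist_nonneg
  have hGb : |G x y| ≤ ρ ^ p := hbound x hx y hy hxy
  have hρ1n : (0:ℝ) < ρ ^ ((1:ℝ) - n) := Real.rpow_pos_of_pos hρ _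
  have hp1n : p - 1 = (1:ℝ) - n := by rw [hpdef]; ring
  have hsplit : ρ ^ p = ρ ^ ((1:ℝ) - n) * ρ := by
    rw [← hp1n]
    conv_lhs => rw [show p = (p-1) + 1 by ring]
    rw [Real.rpow_add hρ, Real.rpow_one]
  by_cases hcase : ρ/4 ≤ d
  · calc |G x y| ≤ ρ ^ p := hGb
      _ = ρ ^ ((1:ℝ) - n) * ρ := hsplit
      _ ≤ ρ ^ ((1:ℝ) - n) * (4 * d) := by
          apply mul_le_mul_of_nonneg_left (by linarith) hρ1n.le
      _ = 4 * ρ ^ ((1:ℝ) - n) * d := by ring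
      _ ≤ (Cm + 4) * ρ ^ ((1:ℝ) - n) * d := by
          apply mul_le_mul_of_nonneg_right _ hd0
          apply mul_le_mul_of_nonneg_right _ hρ1n.le
          linarith
  · push_neg at hcase
    -- frontier is compact and nonempty
    have hfr_ne : (frontier Ω).Nonempty := by
      rw [nonempty_frontier_iff]
      refine ⟨hΩne, ?_⟩
      intro h
      haveI : Nonempty (Fin n) := ⟨⟨0, by omega⟩⟩
      exact NormedSpace.unbounded_univ ℝ (EuclideanSpace ℝ (Fin n)) (h ▸ hΩb)
    have hfr_cpt : IsCompact (frontier Ω) :=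
      Metric.isCompact_of_isClosed_isBounded isClosed_frontier
        (hΩb.closure.subset frontier_subset_closure)
    obtain ⟨z, hzfr, hzd⟩ := hfr_cpt.exists_infDist_eq_dist hfr_ne x
    have hdxz : dist x z = d := (hddef ▸ hzd).symm
    set r : ℝ := min (ρ/16) (r₀/2) with hrdef
    have hrpos : 0 < r := lt_min (by linarith) (by linarith)
    have hrr₀ : r < r₀ := lt_of_le_of_lt (min_le_right _ _) (by linarith)
    have hrρ : r ≤ ρ/16 := min_le_left _ _
    obtain ⟨c, hball, hclos⟩ := hsphere z hzfr r hrpos hrr₀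
    have hzcl : z ∈ closure (ball c r) ∩ closure Ω := by
      rw [hclos]; exact Set.mem_singleton z
    have hzc : dist z c = r := by
      have h1 : dist z c ≤ r := by
        have h2 := hzcl.1
        rw [closure_ball c hrpos.ne'] at h2
        exact h2
      have h2 : ¬ dist z c < r := fun h => (hball (mem_ball.mpr h)) hzcl.2
      push_neg at h2
      linarith
    have hrc : ∀ t ∈ closure Ω, r ≤ dist t c := by
      intro t ht
      by_contra h
      push_neg at h
      exact (hball (mem_ball.mpr h)) ht
    have hcΩ : c ∉ closure Ω := by
      intro h
      have h1 := hrc c h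
      rw [dist_self] at h1
      linarith
    set V : Set (EuclideanSpace ℝ (Fin n)) := Ω ∩ ball z (ρ/4) with hVdef
    have hVo : IsOpen V := hΩo.inter isOpen_ball
    have hVb : Bornology.IsBounded V := hΩb.subset Set.inter_subset_left
    have hxV : x ∈ V := ⟨hx, mem_ball.mpr (by rw [hdxz]; linarith)⟩
    have hxyρ : dist x y = ρ := by rw [hρdef, dist_eq_norm]
    have hyz : 3*ρ/4 < dist y z := by
      have h1 : dist x y ≤ dist x z + dist z y := dist_triangle x z y
      rw [hxyρ, hdxz] at h1
      rw [dist_comm]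
      linarith
    have hclV : closure V ⊆ closure Ω ∩ Metric.closedBall z (ρ/4) := by
      intro t ht
      refine ⟨closure_mono Set.inter_subset_left ht, ?_⟩
      have h1 := closure_mono (Set.inter_subset_right (s := Ω)) ht
      rwa [closure_ball z (by positivity : (ρ/4) ≠ 0)] at h1
    have hne_y : ∀ t ∈ closure V, t ≠ y := by
      intro t ht hty
      have h1 : dist t z ≤ ρ/4 := (hclV ht).2
      rw [hty] at h1
      linarith
    have hVsub : V ⊆ Ω \ {y} := fun t ht =>
      ⟨ht.1, by simp only [Set.mem_singleton_iff]; exact hne_y t (subset_closure ht)⟩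
    have hne_c : ∀ t ∈ closure V, t ≠ c := fun t ht h => hcΩ (h ▸ (hclV ht).1)
    obtain ⟨G', hG'c, hG'eq, hG'fr⟩ := hext y hy
    set M : ℝ := (ρ/2) ^ p with hM
    have hMpos : 0 < M := Real.rpow_pos_of_pos (by linarith) p
    have h3r : (3*r) ^ p < r ^ p :=
      Real.rpow_lt_rpow_of_neg hrpos (by linarith) (by linarith)
    set den : ℝ := r ^ p - (3*r) ^ p with hden
    have hdenpos : 0 < den := by rw [hden]; linarith
    set K : ℝ := M / den with hK
    have hKpos : 0 < K := div_pos hMpos hdenpos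
    set F : EuclideanSpace ℝ (Fin n) → ℝ :=
      fun t => -G' t - K * (r ^ p - radial c p t) with hF
    have hFc : ContinuousOn F (closure V) := by
      apply ContinuousOn.sub
      · apply ContinuousOn.neg
        apply hG'c.mono
        intro t ht
        exact ⟨(hclV ht).1, by simp only [Set.mem_singleton_iff]; exact hne_y t ht⟩
      · apply ContinuousOn.mul continuousOn_const
        apply ContinuousOn.sub continuousOn_const
        intro t ht
        exact ((contDiffAt_radial c p (hne_c t ht)).continuousAt).continuousWithinAt
    have harm := hharm y hy
    have hΩy_open : IsOpen (Ω \ {y}) := hΩo.sdiff isClosed_singleton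
    have hFin_eq : ∀ t ∈ V, F t = -(G t y) - K * (r ^ p - radial c p t) := by
      intro t ht
      rw [hF]
      simp only
      rw [hG'eq t (hVsub ht)]
    have hcdAt : ∀ t ∈ V, ContDiffAt ℝ 2 F t := by
      intro t ht
      have h1 : ContDiffAt ℝ 2 (fun s => G s y) t :=
        (harm.1 t (hVsub ht)).contDiffAt (hΩy_open.mem_nhds (hVsub ht))
      have h2 : ContDiffAt ℝ 2 (radial c p) t :=
        contDiffAt_radial c p (hne_c t (subset_closure ht))
      have h3 : ContDiffAt ℝ 2 (fun s => -(G s y) - K * (r ^ p - radial c p s)) t :=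
        (h1.neg).sub (contDiffAt_const.mul (contDiffAt_const.sub h2))
      apply h3.congr_of_eventuallyEq
      filter_upwards [hVo.mem_nhds ht] with s hs
      exact hFin_eq s hs
    have hF2 : ContDiffOn ℝ 2 F V := fun t ht => (hcdAt t ht).contDiffWithinAt
    have hlapF : ∀ t ∈ V, laplacianR n F t = 0 := by
      intro t ht
      have h1 : ContDiffAt ℝ 2 (fun s => G s y) t :=
        (harm.1 t (hVsub ht)).contDiffAt (hΩy_open.mem_nhds (hVsub ht))
      have h2 : ContDiffAt ℝ 2 (radial c p) t :=
        contDiffAt_radial c p (hne_c t (subset_closure ht))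
      have heq : F =ᶠ[nhds t]
          fun s => (((-1) * G s y) + K * radial c p s) + (-(K * r ^ p)) := by
        filter_upwards [hVo.mem_nhds ht] with s hs
        rw [hFin_eq s hs]; ring
      rw [lap_congr heq, lap_add_const, lap_add (contDiffAt_const.mul h1)
        (contDiffAt_const.mul h2), lap_const_mul h1, lap_const_mul h2,
        harm.2 t (hVsub ht), lap_radial_zero c p (hne_c t (subset_closure ht)) hpdef]
      ring
    have hbdF : ∀ t ∈ frontier V, F t ≤ 0 := by
      intro t ht
      rw [hVo.frontier_eq] at ht
      obtain ⟨htc, htV⟩ := ht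
      have htΩcl : t ∈ closure Ω := (hclV htc).1
      have htz : dist t z ≤ ρ/4 := (hclV htc).2
      have hty : t ≠ y := hne_y t htc
      have htc' : t ≠ c := hne_c t htc
      have hradial : radial c p t = ‖t - c‖ ^ p := radial_eq_norm_rpow c p t
      have hrt : r ≤ ‖t - c‖ := by rw [← dist_eq_norm]; exact hrc t htΩcl
      by_cases htΩ : t ∈ Ω
      · have htz' : dist t z = ρ/4 := by
          have h0 : ¬ dist t z < ρ/4 := fun h => htV ⟨htΩ, mem_ball.mpr h⟩
          push_neg at h0
          linarith
        have h2 : ρ/2 ≤ ‖t - y‖ := by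
          rw [← dist_eq_norm]
          have h3 : dist y z ≤ dist y t + dist t z := dist_triangle y t z
          rw [dist_comm y t] at h3
          linarith
        have h3 := hbound t htΩ y hy hty
        have h4 : ‖t - y‖ ^ p ≤ (ρ/2) ^ p :=
          Real.rpow_le_rpow_of_nonpos (by linarith) h2 (by linarith)
        have h1 : -G' t ≤ M := by
          rw [hG'eq t ⟨htΩ, by simp only [Set.mem_singleton_iff]; exact hty⟩, hM]
          calc -G t y ≤ |G t y| := neg_le_abs _
            _ ≤ ‖t - y‖ ^ p := h3
            _ ≤ (ρ/2) ^ p := h4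
        have h5 : 3*r ≤ ‖t - c‖ := by
          rw [← dist_eq_norm]
          have h6 : dist t z ≤ dist t c + dist c z := dist_triangle t c z
          rw [dist_comm c z, hzc] at h6
          linarith
        have h7 : ‖t - c‖ ^ p ≤ (3*r) ^ p :=
          Real.rpow_le_rpow_of_nonpos (by linarith) h5 (by linarith)
        have h8 : M ≤ K * (r ^ p - radial c p t) := by
          rw [hradial]
          have h9 : den ≤ r ^ p - ‖t - c‖ ^ p := by rw [hden]; linarith
          calc M = K * den := by rw [hK]; field_simp
            _ ≤ K * (r ^ p - ‖t - c‖ ^ p) := mul_le_mul_of_nonneg_left h9 hKpos.le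
        rw [hF]
        simp only
        linarith
      · have htfr : t ∈ frontier Ω := hΩo.frontier_eq ▸ ⟨htΩcl, htΩ⟩
        have h1 : G' t = 0 := hG'fr t htfr
        have h2 : ‖t - c‖ ^ p ≤ r ^ p :=
          Real.rpow_le_rpow_of_nonpos hrpos hrt (by linarith)
        rw [hF]
        simp only [h1, neg_zero, zero_sub]
        rw [hradial]
        have h10 : 0 ≤ K * (r ^ p - ‖t - c‖ ^ p) :=
          mul_nonneg hKpos.le (by linarith)
        linarith
    have hFx := weak_max_principle hVo hVb hFc hF2 hlapF (by omega) hbdF x hxV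
    have hGx : -G x y ≤ K * (r ^ p - radial c p x) := by
      rw [hFin_eq x hxV] at hFx
      linarith
    set s : ℝ := dist x c with hs
    have hsr : r ≤ s := hrc x (subset_closure hx)
    have hsd : s ≤ r + d := by
      have h1 : dist x c ≤ dist x z + dist z c := dist_triangle x z c
      rw [hdxz, hzc] at h1
      linarith
    have hradx : radial c p x = s ^ p := by
      rw [radial_eq_norm_rpow, ← dist_eq_norm]
    have hkey := key_ineq hrpos hsr hq1
    have e1 : -q = p := by rw [hpq]
    rw [e1] at hkey
    have hrp1 : (0:ℝ) < r ^ (p - 1) := Real.rpow_pos_of_pos hrpos _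
    have hstep1 : -G x y ≤ K * (q * d * r ^ (p-1)) := by
      have h1 : r ^ p - s ^ p ≤ q * d * r ^ (p-1) := by
        have h2 : q * (s - r) * r ^ (p-1) ≤ q * d * r ^ (p-1) := by
          apply mul_le_mul_of_nonneg_right _ hrp1.le
          apply mul_le_mul_of_nonneg_left _ hq0
          linarith
        linarith
      calc -G x y ≤ K * (r ^ p - radial c p x) := hGx
        _ = K * (r ^ p - s ^ p) := by rw [hradx]
        _ ≤ K * (q * d * r ^ (p-1)) := mul_le_mul_of_nonneg_left h1 hKpos.le
    have h3p : (3:ℝ) ^ p ≤ 1/3 := by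
      have h1 := Real.rpow_le_rpow_of_exponent_le (by norm_num : (1:ℝ) ≤ 3) hp1
      rwa [Real.rpow_neg_one, show ((3:ℝ))⁻¹ = 1/3 by norm_num] at h1
    have hrp_pos : 0 < r ^ p := Real.rpow_pos_of_pos hrpos p
    have hKle : K ≤ (3/2) * M / r ^ p := by
      rw [hK]
      have hden_ge : (2/3) * r ^ p ≤ den := by
        rw [hden]
        have h1 : (3*r) ^ p = 3 ^ p * r ^ p := Real.mul_rpow (by norm_num) hrpos.le
        have h2 : (3:ℝ) ^ p * r ^ p ≤ (1/3) * r ^ p :=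
          mul_le_mul_of_nonneg_right h3p hrp_pos.le
        rw [h1]
        linarith
      calc M / den ≤ M / ((2/3) * r ^ p) :=
            div_le_div_of_nonneg_left hMpos.le (mul_pos (by norm_num) hrp_pos) hden_ge
        _ = (3/2) * M / r ^ p := by field_simp
    have hfac0 : (0:ℝ) ≤ q * d * r ^ (p-1) :=
      mul_nonneg (mul_nonneg hq0 hd0) hrp1.le
    have hfinal : -G x y ≤ (3/2) * M / r ^ p * (q * d * r ^ (p-1)) :=
      le_trans hstep1 (mul_le_mul_of_nonneg_right hKle hfac0)
    have hrsimp : r ^ (p-1) / r ^ p = 1/r := by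
      rw [← Real.rpow_sub hrpos, show p - 1 - p = -1 by ring, Real.rpow_neg_one, one_div]
    have hfinal2 : -G x y ≤ (3/2) * q * M * d * (1/r) := by
      have e3 : (3/2) * M / r ^ p * (q * d * r ^ (p-1))
          = (3/2) * q * M * d * (r ^ (p-1) / r ^ p) := by ring
      rw [e3, hrsimp] at hfinal
      exact hfinal
    have hM2 : M = 2 ^ q * ρ ^ p := by
      rw [hM, Real.div_rpow hρ.le (by norm_num : (0:ℝ) ≤ 2), div_eq_mul_inv,
        ← Real.rpow_neg (by norm_num : (0:ℝ) ≤ 2), show -p = q by rw [hpq]; ring]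
      ring
    have hρr : ρ / r ≤ 16 + 2*Dm/r₀ := by
      have hρD : ρ ≤ Dm := by
        rw [hρdef, ← dist_eq_norm, hDm]
        exact Metric.dist_le_diam_of_mem hΩb hx hy
      rcases min_choice (ρ/16) (r₀/2) with h1 | h1
      · rw [hrdef, h1]
        have h2 : ρ / (ρ/16) = 16 := by field_simp
        rw [h2]
        linarith
      · rw [hrdef, h1]
        have h2 : ρ / (r₀/2) = 2*ρ/r₀ := by field_simp
        rw [h2]
        have h3 : 2*ρ/r₀ ≤ 2*Dm/r₀ := by gcongr
        linarith
    have habs : |G x y| = -G x y := abs_of_nonpos (hneg x hx y hy hxy)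
    rw [habs]
    have hfac1 : (0:ℝ) ≤ (3/2) * q * 2 ^ q * ρ ^ (p-1) * d :=
      mul_nonneg (mul_nonneg (mul_nonneg (mul_nonneg (by norm_num) hq0) h2q.le)
        (Real.rpow_pos_of_pos hρ _).le) hd0
    have hρsplit2 : ρ ^ p = ρ ^ (p - 1) * ρ := by
      conv_lhs => rw [show p = (p-1) + 1 by ring]
      rw [Real.rpow_add hρ, Real.rpow_one]
    have hlast : (3/2) * q * M * d * (1/r) ≤ Cm * ρ ^ ((1:ℝ)-n) * d := by
      rw [hM2, hρsplit2, hCm, ← hp1n]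
      have e4 : (3/2) * q * (2 ^ q * (ρ ^ (p-1) * ρ)) * d * (1/r)
          = ((3/2) * q * 2 ^ q * ρ ^ (p-1) * d) * (ρ/r) := by ring
      rw [e4]
      calc ((3/2) * q * 2 ^ q * ρ ^ (p-1) * d) * (ρ/r)
          ≤ ((3/2) * q * 2 ^ q * ρ ^ (p-1) * d) * (16 + 2*Dm/r₀) :=
            mul_le_mul_of_nonneg_left hρr hfac1
        _ = (3/2) * q * 2 ^ q * (16 + 2*Dm/r₀) * ρ ^ (p-1) * d := by ring
    have hCmC : Cm * ρ ^ ((1:ℝ)-n) * d ≤ (Cm+4) * ρ ^ ((1:ℝ)-n) * d := by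
      apply mul_le_mul_of_nonneg_right _ hd0
      apply mul_le_mul_of_nonneg_right _ hρ1n.le
      linarith
    linarith
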